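/- (Theorem 2) For IM-OCP with nonincreasing step sizes η_t and independent Bernoulli feedback indicators, if D is a constant such that B_R(u, r_t) ≤ D almost surely for all 1 ≤ t ≤ T, where u is any minimizer of Σ_{t=1}^T ℓ_{1−α}(·, r*_t), then the expected regret satisfies E[ Σ_{t=1}^T ℓ_{1−α}(r_t, r*_t)·obs_t/p_t ] − min_{v ∈ ℝ} Σ_{t=1}^T ℓ_{1−α}(v, r*_t) ≤ D/η_T + (1/(2·μ·p_min)) · Σ_{t=1}^T η_t, where p_min = min_{1 ≤ t ≤ T} p_t. -/

import Mathlib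

open MeasureTheory ProbabilityTheory

/-- The quantile (pinball) loss `ℓ_{1-α}(r, s) = (α - 1{r < s})(r - s)`. -/
noncomputable def pinball (α r s : ℝ) : ℝ := (α - if r < s then 1 else 0) * (r - s)

lemma pinball_subgrad (α a u s : ℝ) :
    pinball α a s - pinball α u s ≤ (α - if a < s then 1 else 0) * (a - u) := by
  unfold pinball
  rcases lt_or_ge a s with h1 | h1 <;> rcases lt_or_ge u s with h2 | h2
  · rw [if_pos h1, if_pos h2]; ring_nf; linarith
  · rw [if_pos h1, if_neg (not_lt.2 h2)]; nlinarith
  · rw [if_neg (not_lt.2 h1), if_pos h2]; nlinarith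
  · rw [if_neg (not_lt.2 h1), if_neg (not_lt.2 h2)]; ring_nf; linarith

/-- Bregman divergence lower bound from strong convexity of `R'`. -/
lemma breg_lb (μ : ℝ) (hμ : 0 < μ) (R R' : ℝ → ℝ)
    (hR : ∀ x, HasDerivAt R (R' x) x)
    (hsc : ∀ x y, (R' x - R' y) * (x - y) ≥ μ * (x - y) ^ 2) :
    ∀ x y, μ / 2 * (x - y) ^ 2 ≤ R x - R y - R' y * (x - y) := by
  intro x y
  set φ : ℝ → ℝ := fun s => R s - R' y * (s - y) - μ / 2 * (s - y) ^ 2 with hφdef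
  have hφ : ∀ s, HasDerivAt φ (R' s - R' y - μ * (s - y)) s := by
    intro s
    have h1 : HasDerivAt (fun s : ℝ => R' y * (s - y)) (R' y) s := by
      simpa using ((hasDerivAt_id s).sub_const y).const_mul (R' y)
    have h2 : HasDerivAt (fun s : ℝ => μ / 2 * (s - y) ^ 2) (μ * (s - y)) s := by
      have := (((hasDerivAt_id s).sub_const y).pow 2).const_mul (μ / 2)
      refine this.congr_deriv ?_
      simp only [id, Nat.cast_ofNat, Nat.add_one_sub_one, pow_one, mul_one]
      ring
    exact ((hR s).sub h1).sub h2
  have hdiff : Differentiable ℝ φ := fun s => (hφ s).differentiableAt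
  have hkey : φ y ≤ φ x := by
    rcases le_total y x with h | h
    · have hm := monotoneOn_of_deriv_nonneg (convex_Icc y x)
        (hdiff.continuous.continuousOn) (hdiff.differentiableOn)
        (fun s hs => by
          rw [(hφ s).deriv]
          rw [interior_Icc] at hs
          have hsy : y < s := hs.1
          have := hsc s y
          have h3 : μ * (s - y) ≤ R' s - R' y := by
            rw [ge_iff_le] at this
            nlinarith [sub_pos.2 hsy]
          linarith)
      exact hm (Set.left_mem_Icc.2 h) (Set.right_mem_Icc.2 h) h
    · have hm := antitoneOn_of_deriv_nonpos (convex_Icc x y)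
        (hdiff.continuous.continuousOn) (hdiff.differentiableOn)
        (fun s hs => by
          rw [(hφ s).deriv]
          rw [interior_Icc] at hs
          have hsy : s < y := hs.2
          have := hsc s y
          have h3 : R' s - R' y ≤ μ * (s - y) := by
            rw [ge_iff_le] at this
            nlinarith [sub_neg.2 hsy]
          linarith)
      exact hm (Set.left_mem_Icc.2 h) (Set.right_mem_Icc.2 h) h
  have hy : φ y = R y := by simp [hφdef]
  rw [hy] at hkey
  simp only [hφdef] at hkey
  linarith

/-- Single mirror-descent step inequality. -/
lemma step_ineq (μ : ℝ) (hμ : 0 < μ) (R R' : ℝ → ℝ)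
    (hbl : ∀ x y, μ / 2 * (x - y) ^ 2 ≤ R x - R y - R' y * (x - y))
    (a b u c : ℝ) (hc : R' b = R' a - c) :
    c * (a - u) ≤ (R u - R a - R' a * (u - a)) - (R u - R b - R' b * (u - b))
      + c ^ 2 / (2 * μ) := by
  have h := hbl b a
  rw [hc]
  have hyoung : 0 ≤ μ / 2 * (b - a) ^ 2 + c * (b - a) + c ^ 2 / (2 * μ) := by
    have h1 : 0 ≤ (μ * (b - a) + c) ^ 2 / (2 * μ) := by positivity
    have h2 : (μ * (b - a) + c) ^ 2 / (2 * μ)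
        = μ / 2 * (b - a) ^ 2 + c * (b - a) + c ^ 2 / (2 * μ) := by
      field_simp
      ring
    linarith [h2 ▸ h1]
  nlinarith

/-- Pointwise mirror-descent regret bound. -/
lemma md_regret (μ D : ℝ) (hμ : 0 < μ) (R R' : ℝ → ℝ)
    (hbl : ∀ x y, μ / 2 * (x - y) ^ 2 ≤ R x - R y - R' y * (x - y))
    (η : ℕ → ℝ) (hη : ∀ t, 0 < η t) (hηdec : ∀ t, η (t + 1) ≤ η t)
    (r g : ℕ → ℝ) (u : ℝ)
    (hupd : ∀ t, 1 ≤ t → R' (r (t + 1)) = R' (r t) - η t * g t)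
    (T : ℕ) (hT : 1 ≤ T)
    (hD : ∀ t ∈ Finset.Icc 1 T, R u - R (r t) - R' (r t) * (u - r t) ≤ D) :
    ∑ t ∈ Finset.Icc 1 T, g t * (r t - u) ≤
      D / η T + ∑ t ∈ Finset.Icc 1 T, η t * (g t) ^ 2 / (2 * μ) := by
  have key : ∀ T, 1 ≤ T → (∀ t ∈ Finset.Icc 1 T, R u - R (r t) - R' (r t) * (u - r t) ≤ D) →
      ∑ t ∈ Finset.Icc 1 T, g t * (r t - u)
        + (R u - R (r (T+1)) - R' (r (T+1)) * (u - r (T+1))) / η T ≤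
      D / η T + ∑ t ∈ Finset.Icc 1 T, η t * (g t) ^ 2 / (2 * μ) := by
    intro T hT1
    induction T, hT1 using Nat.le_induction with
    | base =>
      intro hD1
      simp only [Finset.Icc_self, Finset.sum_singleton]
      have hstep := step_ineq μ hμ R R' hbl (r 1) (r 2) u (η 1 * g 1) (hupd 1 le_rfl)
      have hD1' := hD1 1 (by simp)
      have hη1 := hη 1
      have h1 : g 1 * (r 1 - u) + (R u - R (r 2) - R' (r 2) * (u - r 2)) / η 1
          = (η 1 * g 1 * (r 1 - u) + (R u - R (r 2) - R' (r 2) * (u - r 2))) / η 1 := by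
        field_simp
      have h2 : D / η 1 + η 1 * g 1 ^ 2 / (2 * μ)
          = (D + (η 1 * g 1) ^ 2 / (2 * μ)) / η 1 := by
        field_simp
      have h3 : (1:ℕ) + 1 = 2 := rfl
      rw [h3, h1, h2, div_le_div_iff_of_pos_right hη1]
      nlinarith [hstep, hD1']
    | succ n hn ih =>
      intro hDn
      have hDn' : ∀ t ∈ Finset.Icc 1 n, R u - R (r t) - R' (r t) * (u - r t) ≤ D :=
        fun t ht => hDn t (Finset.mem_Icc.2
          ⟨(Finset.mem_Icc.1 ht).1, (Finset.mem_Icc.1 ht).2.trans (Nat.le_succ n)⟩)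
      have ihn := ih hDn'
      rw [Finset.sum_Icc_succ_top (by omega : 1 ≤ n+1), Finset.sum_Icc_succ_top (by omega : 1 ≤ n+1)]
      have hstep := step_ineq μ hμ R R' hbl (r (n+1)) (r (n+2)) u (η (n+1) * g (n+1))
        (hupd (n+1) (by omega))
      have hηn := hη n
      have hηn1 := hη (n+1)
      have hdec := hηdec n
      have hDlast := hDn (n+1) (by simp)
      set Bn := R u - R (r (n+1)) - R' (r (n+1)) * (u - r (n+1)) with hBn
      set Bn1 := R u - R (r (n+1+1)) - R' (r (n+1+1)) * (u - r (n+1+1)) with hBn1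
      have hstep' : g (n+1) * (r (n+1) - u) ≤ (Bn - Bn1) / η (n+1)
          + η (n+1) * (g (n+1)) ^ 2 / (2 * μ) := by
        have h1 : (Bn - Bn1) / η (n+1) + η (n+1) * (g (n+1)) ^ 2 / (2 * μ)
            - g (n+1) * (r (n+1) - u)
            = ((Bn - Bn1) + (η (n+1) * g (n+1)) ^ 2 / (2 * μ)
              - (η (n+1) * g (n+1)) * (r (n+1) - u)) / η (n+1) := by
          field_simp
        have h2 : 0 ≤ ((Bn - Bn1) + (η (n+1) * g (n+1)) ^ 2 / (2 * μ)
              - (η (n+1) * g (n+1)) * (r (n+1) - u)) / η (n+1) :=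
          div_nonneg (by linarith [hstep]) hηn1.le
        linarith [h1 ▸ h2]
      have hmono : Bn / η (n+1) - Bn / η n ≤ D / η (n+1) - D / η n := by
        have hfac : 0 ≤ 1 / η (n+1) - 1 / η n := by
          rw [sub_nonneg]
          exact one_div_le_one_div_of_le hηn1 hdec
        have h1 : Bn / η (n+1) - Bn / η n = Bn * (1 / η (n+1) - 1 / η n) := by ring
        have h2 : D / η (n+1) - D / η n = D * (1 / η (n+1) - 1 / η n) := by ring
        rw [h1, h2]
        exact mul_le_mul_of_nonneg_right hDlast hfac
      have hsub : (Bn - Bn1) / η (n+1) = Bn / η (n+1) - Bn1 / η (n+1) := by ring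
      rw [hsub] at hstep'
      linarith [hstep', ihn, hmono]
  have hfinal := key T hT hD
  have hBpos : 0 ≤ (R u - R (r (T+1)) - R' (r (T+1)) * (u - r (T+1))) / η T := by
    apply div_nonneg _ (le_of_lt (hη T))
    nlinarith [hbl u (r (T+1)), sq_nonneg (u - r (T+1))]
  linarith

theorem imocp_expected_regret_bound
    {Ω : Type*} [MeasurableSpace Ω] (Pr : Measure Ω) [IsProbabilityMeasure Pr]
    (B α μ D : ℝ) (hB : 0 < B) (hα : α ∈ Set.Icc (0 : ℝ) 1) (hμ : 0 < μ)
    (rstar η p : ℕ → ℝ)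
    (hrstar : ∀ t, rstar t ∈ Set.Icc 0 B)
    (hη : ∀ t, 0 < η t)
    (hηdec : ∀ t, η (t + 1) ≤ η t)
    (hp : ∀ t, p t ∈ Set.Ioc (0 : ℝ) 1)
    (obs : ℕ → Ω → ℝ)
    (hobsmeas : ∀ t, Measurable (obs t))
    (hobs01 : ∀ t ω, obs t ω = 0 ∨ obs t ω = 1)
    (hindep : iIndepFun obs Pr)
    (hobsp : ∀ t, Pr {ω | obs t ω = 1} = ENNReal.ofReal (p t))
    (R R' : ℝ → ℝ)
    (hR : ∀ x, HasDerivAt R (R' x) x)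
    (hbij : Function.Bijective R')
    (hsc : ∀ x y, (R' x - R' y) * (x - y) ≥ μ * (x - y) ^ 2)
    (r E : ℕ → Ω → ℝ)
    (hrmeas : ∀ t, Measurable (r t))
    (hE : ∀ t ω, E t ω = if rstar t > r t ω then 1 else 0)
    (hr1 : ∀ ω, r 1 ω ∈ Set.Icc 0 B)
    (hupd : ∀ t, 1 ≤ t → ∀ ω,
      R' (r (t + 1) ω) = R' (r t ω) - η t * (α - E t ω) * obs t ω / p t)
    (T : ℕ) (hT : 1 ≤ T)
    (u : ℝ)
    (hu : ∀ v : ℝ, ∑ t ∈ Finset.Icc 1 T, pinball α u (rstar t) ≤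
      ∑ t ∈ Finset.Icc 1 T, pinball α v (rstar t))
    (hD : ∀ t ∈ Finset.Icc 1 T, ∀ᵐ ω ∂Pr,
      R u - R (r t ω) - R' (r t ω) * (u - r t ω) ≤ D) :
    (∫ ω, ∑ t ∈ Finset.Icc 1 T, pinball α (r t ω) (rstar t) * obs t ω / p t ∂Pr) -
        ∑ t ∈ Finset.Icc 1 T, pinball α u (rstar t) ≤
      D / η T +
        (1 / (2 * μ * ((Finset.Icc 1 T).inf' (Finset.nonempty_Icc.mpr hT) p))) *
          ∑ t ∈ Finset.Icc 1 T, η t := by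
  have hα0 := hα.1
  have hα1 := hα.2
  have hpt0 : ∀ t, 0 < p t := fun t => (hp t).1
  have hbl := breg_lb μ hμ R R' hR hsc
  -- bounds on |α - E t ω| and |obs t ω|
  have hEb : ∀ t ω, |α - E t ω| ≤ 1 := by
    intro t ω
    rw [hE t ω]
    split_ifs with h
    · rw [abs_le]; constructor <;> linarith
    · rw [abs_le]; constructor <;> linarith
  have hob : ∀ t ω, |obs t ω| ≤ 1 := by
    intro t ω
    rcases hobs01 t ω with h | h <;> simp [h]
  have hobnn : ∀ t ω, 0 ≤ obs t ω := by
    intro t ω; rcases hobs01 t ω with h | h <;> simp [h]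
  -- Lipschitz-type consequence of strong convexity
  have hlip : ∀ x y : ℝ, μ * |x - y| ≤ |R' x - R' y| := by
    intro x y
    rcases eq_or_ne x y with h | h
    · simp [h]
    · have h1 := hsc x y
      have h2 : (R' x - R' y) * (x - y) ≤ |R' x - R' y| * |x - y| := by
        rw [← abs_mul]; exact le_abs_self _
      have h3 : 0 < |x - y| := abs_pos.2 (sub_ne_zero.2 h)
      have h4 : μ * |x - y| * |x - y| ≤ |R' x - R' y| * |x - y| := by
        have h5 : |x - y| * |x - y| = (x - y) ^ 2 := by rw [← sq, sq_abs]
        nlinarith [h1, h2, h5]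
      exact le_of_mul_le_mul_right h4 h3
  -- uniform boundedness of the iterates
  have hbnd : ∀ t, 1 ≤ t → ∃ C, ∀ ω, |r t ω| ≤ C := by
    intro t ht
    induction t, ht using Nat.le_induction with
    | base =>
      refine ⟨B, fun ω => ?_⟩
      have h1 := (hr1 ω).1
      have h2 := (hr1 ω).2
      rw [abs_le]; constructor <;> linarith
    | succ n hn ih =>
      obtain ⟨C, hC⟩ := ih
      refine ⟨C + η n / (μ * p n), fun ω => ?_⟩
      have hd := hupd n hn ω
      have hdiffb : |R' (r (n+1) ω) - R' (r n ω)| ≤ η n / p n := by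
        rw [hd]
        have h1 : R' (r n ω) - η n * (α - E n ω) * obs n ω / p n - R' (r n ω)
            = -(η n * (α - E n ω) * obs n ω / p n) := by ring
        rw [h1, abs_neg, abs_div, abs_of_pos (hpt0 n), abs_mul, abs_mul,
          abs_of_pos (hη n), div_le_div_iff_of_pos_right (hpt0 n)]
        have hm : |α - E n ω| * |obs n ω| ≤ 1 :=
          mul_le_one₀ (hEb n ω) (abs_nonneg _) (hob n ω)
        calc η n * |α - E n ω| * |obs n ω| = η n * (|α - E n ω| * |obs n ω|) := by ring
          _ ≤ η n * 1 := mul_le_mul_of_nonneg_left hm (hη n).le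
          _ = η n := mul_one _
      have h6 : μ * |r (n+1) ω - r n ω| ≤ η n / p n :=
        le_trans (hlip _ _) hdiffb
      have h7 : |r (n+1) ω - r n ω| ≤ η n / (μ * p n) := by
        have h8 : η n / (μ * p n) = (η n / p n) / μ := by ring
        rw [h8, le_div_iff₀ hμ]
        linarith
      have h9 := abs_sub_abs_le_abs_sub (r (n+1) ω) (r n ω)
      linarith [hC ω]
  -- integral of obs
  have hobsint_val : ∀ t, ∫ ω, obs t ω ∂Pr = p t := by
    intro t
    have hA : MeasurableSet {ω | obs t ω = 1} := hobsmeas t (measurableSet_singleton 1)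
    have hfe : (fun ω => obs t ω) = Set.indicator {ω | obs t ω = 1} (fun _ => (1:ℝ)) := by
      funext ω
      rcases hobs01 t ω with h | h <;>
        simp [Set.indicator_apply, Set.mem_setOf_eq, h]
    rw [hfe, integral_indicator_const (1:ℝ) hA, measureReal_def, hobsp t]
    simp [ENNReal.toReal_ofReal (hpt0 t).le]
  have hobs_int : ∀ t, Integrable (obs t) Pr := by
    intro t
    exact ⟨(hobsmeas t).aestronglyMeasurable,
      HasFiniteIntegral.of_bounded (C := 1) (Filter.Eventually.of_forall fun ω => by
        rw [Real.norm_eq_abs]; exact hob t ω)⟩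
  -- measurability of summands
  have hmeas_t : ∀ t, Measurable (fun ω => pinball α (r t ω) (rstar t) * obs t ω / p t) := by
    intro t
    have : Measurable (fun ω => (α - if r t ω < rstar t then (1:ℝ) else 0)
        * (r t ω - rstar t) * obs t ω / p t) :=
      (((measurable_const.sub (Measurable.ite (measurableSet_lt (hrmeas t) measurable_const)
        measurable_const measurable_const)).mul ((hrmeas t).sub measurable_const)).mul
        (hobsmeas t)).div_const (p t)
    exact this
  -- integrability of summands
  have hsummand_int : ∀ t ∈ Finset.Icc 1 T,
      Integrable (fun ω => pinball α (r t ω) (rstar t) * obs t ω / p t) Pr := by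
    intro t ht
    obtain ⟨C, hC⟩ := hbnd t (Finset.mem_Icc.1 ht).1
    refine ⟨(hmeas_t t).aestronglyMeasurable,
      HasFiniteIntegral.of_bounded (C := (C + B) / p t)
        (Filter.Eventually.of_forall fun ω => ?_)⟩
    rw [Real.norm_eq_abs, abs_div, abs_of_pos (hpt0 t), abs_mul]
    rw [div_le_div_iff_of_pos_right (hpt0 t)]
    have hpb : |pinball α (r t ω) (rstar t)| ≤ C + B := by
      unfold pinball
      rw [abs_mul]
      have h1 : |α - if r t ω < rstar t then (1:ℝ) else 0| ≤ 1 := by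
        split_ifs with h
        · rw [abs_le]; constructor <;> linarith
        · rw [abs_le]; constructor <;> linarith
      have h2 : |r t ω - rstar t| ≤ C + B := by
        have h3 : |r t ω - rstar t| ≤ |r t ω| + |rstar t| := by
          have := abs_add_le (r t ω) (-(rstar t))
          simpa [sub_eq_add_neg] using this
        have h4 : |rstar t| ≤ B := by
          have := (hrstar t).1; have := (hrstar t).2
          rw [abs_le]; constructor <;> linarith
        linarith [hC ω]
      nlinarith [abs_nonneg (α - if r t ω < rstar t then (1:ℝ) else 0),
        abs_nonneg (r t ω - rstar t)]
    nlinarith [hob t ω, abs_nonneg (pinball α (r t ω) (rstar t)), abs_nonneg (obs t ω),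
      le_abs_self (C + B), abs_nonneg (r t ω)]
  -- minimum feedback probability
  set P := (Finset.Icc 1 T).inf' (Finset.nonempty_Icc.mpr hT) p with hPdef
  have hPpos : 0 < P := by
    obtain ⟨t0, ht0, hPe⟩ := Finset.exists_mem_eq_inf' (Finset.nonempty_Icc.mpr hT) p
    rw [hPdef, hPe]; exact hpt0 t0
  have hPle : ∀ t ∈ Finset.Icc 1 T, P ≤ p t := fun t ht => Finset.inf'_le p ht
  set c : ℕ → ℝ := fun t => pinball α u (rstar t) / p t + η t / (2 * μ * (p t)^2) with hcdef
  -- a.e. simultaneous Bregman bound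
  have haeD : ∀ᵐ ω ∂Pr, ∀ t ∈ Finset.Icc 1 T,
      R u - R (r t ω) - R' (r t ω) * (u - r t ω) ≤ D := by
    have h1 : ∀ᵐ ω ∂Pr, ∀ t ∈ (↑(Finset.Icc 1 T) : Set ℕ),
        R u - R (r t ω) - R' (r t ω) * (u - r t ω) ≤ D :=
      (ae_ball_iff ((Finset.Icc 1 T).countable_toSet)).2 (fun t ht => hD t ht)
    exact h1.mono fun ω hω t ht => hω t ht
  -- a.e. pointwise regret bound
  have hpt : ∀ᵐ ω ∂Pr,
      ∑ t ∈ Finset.Icc 1 T, pinball α (r t ω) (rstar t) * obs t ω / p t ≤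
      D / η T + ∑ t ∈ Finset.Icc 1 T, c t * obs t ω := by
    refine haeD.mono fun ω hω => ?_
    have hmd := md_regret μ D hμ R R' hbl η hη hηdec (fun t => r t ω)
      (fun t => (α - E t ω) * obs t ω / p t) u
      (fun t ht => by rw [hupd t ht ω]; ring) T hT (fun t ht => hω t ht)
    have hterm : ∀ t ∈ Finset.Icc 1 T,
        pinball α (r t ω) (rstar t) * obs t ω / p t ≤
        pinball α u (rstar t) * obs t ω / p t
          + ((α - E t ω) * obs t ω / p t) * (r t ω - u) := by
      intro t ht
      have hop : 0 ≤ obs t ω / p t := div_nonneg (hobnn t ω) (hpt0 t).le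
      have hsg := mul_le_mul_of_nonneg_right (pinball_subgrad α (r t ω) u (rstar t)) hop
      rw [hE t ω]
      simp only [gt_iff_lt]
      ring_nf
      ring_nf at hsg
      linarith
    have hsq : ∀ t ∈ Finset.Icc 1 T,
        η t * ((α - E t ω) * obs t ω / p t)^2 / (2 * μ)
          ≤ η t / (2 * μ * (p t)^2) * obs t ω := by
      intro t ht
      rcases hobs01 t ω with h | h
      · rw [h]
        simp
      · have hq : (α - E t ω)^2 ≤ 1 := by
          rw [hE t ω]; split_ifs with h' <;> nlinarith
        have he1 : η t * ((α - E t ω) * obs t ω / p t)^2 / (2 * μ)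
            = (α - E t ω)^2 * (η t / (2 * μ * (p t)^2)) := by
          rw [h]
          field_simp [(hpt0 t).ne', hμ.ne']
        have he2 : η t / (2 * μ * (p t)^2) * obs t ω
            = 1 * (η t / (2 * μ * (p t)^2)) := by rw [h]; ring
        rw [he1, he2]
        exact mul_le_mul_of_nonneg_right hq
          (div_nonneg (hη t).le (mul_nonneg (by linarith) (sq_nonneg _)))
    calc ∑ t ∈ Finset.Icc 1 T, pinball α (r t ω) (rstar t) * obs t ω / p t
        ≤ ∑ t ∈ Finset.Icc 1 T, (pinball α u (rstar t) * obs t ω / p t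
            + ((α - E t ω) * obs t ω / p t) * (r t ω - u)) :=
          Finset.sum_le_sum hterm
      _ = (∑ t ∈ Finset.Icc 1 T, pinball α u (rstar t) * obs t ω / p t)
          + ∑ t ∈ Finset.Icc 1 T, ((α - E t ω) * obs t ω / p t) * (r t ω - u) :=
          Finset.sum_add_distrib
      _ ≤ (∑ t ∈ Finset.Icc 1 T, pinball α u (rstar t) * obs t ω / p t)
          + (D / η T + ∑ t ∈ Finset.Icc 1 T,
              η t * ((α - E t ω) * obs t ω / p t)^2 / (2 * μ)) := by
          linarith [hmd]
      _ ≤ D / η T + ∑ t ∈ Finset.Icc 1 T, c t * obs t ω := by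
          have hs1 : ∑ t ∈ Finset.Icc 1 T, η t * ((α - E t ω) * obs t ω / p t)^2 / (2*μ)
              ≤ ∑ t ∈ Finset.Icc 1 T, η t / (2*μ*(p t)^2) * obs t ω :=
            Finset.sum_le_sum hsq
          have hs2 : ∑ t ∈ Finset.Icc 1 T, c t * obs t ω
              = (∑ t ∈ Finset.Icc 1 T, pinball α u (rstar t) * obs t ω / p t)
                + ∑ t ∈ Finset.Icc 1 T, η t / (2*μ*(p t)^2) * obs t ω := by
            rw [← Finset.sum_add_distrib]
            refine Finset.sum_congr rfl fun t ht => ?_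
            simp only [hcdef]
            ring
          linarith
  -- integrability
  have hGsum_int : Integrable (fun ω => ∑ t ∈ Finset.Icc 1 T, c t * obs t ω) Pr :=
    integrable_finset_sum _ fun t _ => (hobs_int t).const_mul (c t)
  have hG_int : Integrable (fun ω => D / η T + ∑ t ∈ Finset.Icc 1 T, c t * obs t ω) Pr :=
    (integrable_const _).add hGsum_int
  have hF_int : Integrable (fun ω => ∑ t ∈ Finset.Icc 1 T,
      pinball α (r t ω) (rstar t) * obs t ω / p t) Pr :=
    integrable_finset_sum _ hsummand_int
  -- value of the dominating integral
  have hGval : ∫ ω, (D / η T + ∑ t ∈ Finset.Icc 1 T, c t * obs t ω) ∂Pr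
      = D / η T + ∑ t ∈ Finset.Icc 1 T, c t * p t := by
    rw [integral_add (integrable_const _) hGsum_int, integral_const,
      integral_finset_sum _ (fun t _ => (hobs_int t).const_mul (c t))]
    simp only [measure_univ, ENNReal.toReal_one, smul_eq_mul, one_mul, probReal_univ]
    congr 1
    refine Finset.sum_congr rfl fun t ht => ?_
    rw [integral_const_mul, hobsint_val t]
  have hle := integral_mono_ae hF_int hG_int hpt
  rw [hGval] at hle
  have hcp : ∀ t ∈ Finset.Icc 1 T,
      c t * p t = pinball α u (rstar t) + η t / (2 * μ * p t) := by
    intro t ht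
    have hpne := (hpt0 t).ne'
    simp only [hcdef]
    field_simp
  have hsum3 : ∑ t ∈ Finset.Icc 1 T, c t * p t
      = (∑ t ∈ Finset.Icc 1 T, pinball α u (rstar t))
        + ∑ t ∈ Finset.Icc 1 T, η t / (2 * μ * p t) := by
    rw [Finset.sum_congr rfl hcp, Finset.sum_add_distrib]
  have hsum4 : ∑ t ∈ Finset.Icc 1 T, η t / (2 * μ * p t)
      ≤ (1 / (2 * μ * P)) * ∑ t ∈ Finset.Icc 1 T, η t := by
    rw [Finset.mul_sum]
    refine Finset.sum_le_sum fun t ht => ?_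
    have h1 : (1 : ℝ) / (2 * μ * P) * η t = η t / (2 * μ * P) := by ring
    rw [h1]
    gcongr
    · exact (hη t).le
    · exact hPle t ht
  linarith [hle]
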